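/- arXiv:2205.10969 — 3 statements merged into one kernel-verified Lean document; each statement's English description precedes it below -/
import Mathlib

section
/- For a positive n×n matrix C and a positive vector x, the maximum over all i, j of c_{ij} * x_j / x_i equals 1 plus the maximum over all i, j of the relative error |c_{ij} - x_i/x_j| / c_{ij}, provided C is symmetrically reciprocal (c_{ij} = 1/c_{ji}). -/
/-- Maximum of a function over `Fin n` (nonempty since `0 < n`). -/
noncomputable def vmax {n : ℕ} (hn : 0 < n) (f : Fin n → ℝ) : ℝ :=
  Finset.univ.sup' (Finset.univ_nonempty_iff.mpr ⟨⟨0, hn⟩⟩) f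

/-- Minimum of a function over `Fin n`. -/
noncomputable def vmin {n : ℕ} (hn : 0 < n) (f : Fin n → ℝ) : ℝ :=
  Finset.univ.inf' (Finset.univ_nonempty_iff.mpr ⟨⟨0, hn⟩⟩) f

/-- Max-times matrix product. -/
noncomputable def mtProd {n : ℕ} (hn : 0 < n) (X Y : Matrix (Fin n) (Fin n) ℝ) :
    Matrix (Fin n) (Fin n) ℝ :=
  fun i j => vmax hn (fun k => X i k * Y k j)

/-- Max-times matrix powers, `B^0 = I`. -/
noncomputable def mtPow {n : ℕ} (hn : 0 < n) (B : Matrix (Fin n) (Fin n) ℝ) :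
    ℕ → Matrix (Fin n) (Fin n) ℝ
  | 0 => fun i j => if i = j then (1 : ℝ) else 0
  | (k + 1) => mtProd hn B (mtPow hn B k)

/-- Kleene star: entrywise maximum of `B^0, ..., B^(n-1)`. -/
noncomputable def kstar {n : ℕ} (hn : 0 < n) (B : Matrix (Fin n) (Fin n) ℝ) :
    Matrix (Fin n) (Fin n) ℝ :=
  fun i j => vmax hn (fun k : Fin n => mtPow hn B k.1 i j)

/-- Max-times matrix-vector product. -/
noncomputable def mtVec {n : ℕ} (hn : 0 < n) (X : Matrix (Fin n) (Fin n) ℝ)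
    (x : Fin n → ℝ) : Fin n → ℝ :=
  fun i => vmax hn (fun j => X i j * x j)

theorem maxRatio_eq_one_add_relative_error {n : ℕ} (hn : 0 < n)
    (C : Matrix (Fin n) (Fin n) ℝ) (x : Fin n → ℝ)
    (hC : ∀ i j, 0 < C i j)
    (hrec : ∀ i j, C i j * C j i = 1)
    (hx : ∀ i, 0 < x i) :
    vmax hn (fun i => vmax hn (fun j => C i j * x j / x i)) =
      1 + vmax hn (fun i => vmax hn (fun j => |C i j - x i / x j| / C i j)) := by
  classical
  set g : Fin n → Fin n → ℝ := fun i j => C i j * x j / x i with hg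
  have hgpos : ∀ i j, 0 < g i j := fun i j => by
    have h1 := hC i j; have h2 := hx i; have h3 := hx j
    simp only [hg]; positivity
  set M := vmax hn (fun i => vmax hn (fun j => g i j)) with hM
  have hle : ∀ i j, g i j ≤ M := by
    intro i j
    calc g i j ≤ vmax hn (fun j => g i j) :=
          Finset.le_sup' (fun j => g i j) (Finset.mem_univ j)
      _ ≤ M := Finset.le_sup' (fun i => vmax hn (fun j => g i j)) (Finset.mem_univ i)
  have hinv : ∀ i j, g i j * g j i = 1 := by
    intro i j
    have hxi := (hx i).ne'
    have hxj := (hx j).ne'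
    simp only [hg]
    field_simp
    linear_combination hrec i j
  have hM1 : 1 ≤ M := by
    set i0 : Fin n := ⟨0, hn⟩
    have hc : C i0 i0 = 1 := by nlinarith [hrec i0 i0, hC i0 i0]
    have h1 : g i0 i0 = 1 := by
      simp only [hg, hc, one_mul]
      exact div_self (hx i0).ne'
    calc (1:ℝ) = g i0 i0 := h1.symm
      _ ≤ M := hle i0 i0
  have habs : ∀ i j, |1 - g j i| ≤ M - 1 := by
    intro i j
    rw [abs_le]
    constructor
    · have := hle j i; linarith
    · have h1 := hinv i j
      have h2 := hle i j
      have h3 := hgpos i j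
      have h4 := hgpos j i
      nlinarith [sq_nonneg (g i j - 1)]
  have hterm : ∀ i j, |C i j - x i / x j| / C i j = |1 - g j i| := by
    intro i j
    have hc := hC i j
    have hxj := (hx j).ne'
    have hcji : C j i = 1 / C i j := by
      field_simp
      linear_combination hrec i j
    have key : C i j - x i / x j = C i j * (1 - g j i) := by
      simp only [hg, hcji]
      field_simp
    rw [key, abs_mul, abs_of_pos hc, mul_comm, mul_div_assoc, div_self hc.ne', mul_one]
  have hS : vmax hn (fun i => vmax hn (fun j => |1 - g j i|)) = M - 1 := by
    apply le_antisymm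
    · apply Finset.sup'_le
      intro i _
      apply Finset.sup'_le
      intro j _
      exact habs i j
    · obtain ⟨i0, -, hi0⟩ := Finset.exists_mem_eq_sup' (Finset.univ_nonempty_iff.mpr ⟨⟨0, hn⟩⟩)
        (fun i => vmax hn (fun j => g i j))
      obtain ⟨j0, -, hj0⟩ := Finset.exists_mem_eq_sup' (Finset.univ_nonempty_iff.mpr ⟨⟨0, hn⟩⟩)
        (fun j => g i0 j)
      have hgM : M = g i0 j0 := hi0.trans hj0
      have heq : M - 1 = |1 - g i0 j0| := by
        rw [← hgM, abs_of_nonpos (by linarith)]; ring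
      rw [heq]
      calc |1 - g i0 j0| ≤ vmax hn (fun j => |1 - g j j0|) :=
            Finset.le_sup' (fun j => |1 - g j j0|) (Finset.mem_univ i0)
        _ ≤ vmax hn (fun i => vmax hn (fun j => |1 - g j i|)) :=
            Finset.le_sup' (fun i => vmax hn (fun j => |1 - g j i|)) (Finset.mem_univ j0)
  have hRHS : (fun i => vmax hn (fun j => |C i j - x i / x j| / C i j)) =
      (fun i => vmax hn (fun j => |1 - g j i|)) := by
    funext i
    congr 1
    funext j
    exact hterm i j
  calc M = 1 + (M - 1) := by ring
    _ = 1 + vmax hn (fun i => vmax hn (fun j => |1 - g j i|)) := by rw [hS]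
    _ = 1 + vmax hn (fun i => vmax hn (fun j => |C i j - x i / x j| / C i j)) := by rw [hRHS]
end

section
/- In max-times algebra, if an n×n nonnegative matrix B satisfies Tr(B) = max_{1≤k≤n} (max-times trace of B^k) ≤ 1, then the Kleene star B* = I ⊕ B ⊕ ... ⊕ B^{n-1} (entrywise maximum of max-times powers) satisfies B* ≥ B^p entrywise for every integer p ≥ 0. -/
/-- Entries of max-times powers are nonnegative. -/
lemma mtPow_nonneg {n : ℕ} (hn : 0 < n) (B : Matrix (Fin n) (Fin n) ℝ)
    (hB : ∀ i j, 0 ≤ B i j) : ∀ p i j, 0 ≤ mtPow hn B p i j := by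
  intro p
  induction p with
  | zero => intro i j; simp [mtPow]; split <;> norm_num
  | succ p ih =>
    intro i j
    have h0 : (0:ℝ) ≤ B i i * mtPow hn B p i j := mul_nonneg (hB i i) (ih i j)
    calc (0:ℝ) ≤ B i i * mtPow hn B p i j := h0
      _ ≤ vmax hn (fun k => B i k * mtPow hn B p k j) :=
        Finset.le_sup' (fun k => B i k * mtPow hn B p k j) (Finset.mem_univ i)
      _ = mtPow hn B (p+1) i j := rfl

/-- A path product is a lower bound for the corresponding power entry. -/
lemma path_le_mtPow {n : ℕ} (hn : 0 < n) (B : Matrix (Fin n) (Fin n) ℝ)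
    (hB : ∀ i j, 0 ≤ B i j) :
    ∀ p (f : ℕ → Fin n) (j : Fin n), f p = j →
      (∏ t ∈ Finset.range p, B (f t) (f (t+1))) ≤ mtPow hn B p (f 0) j := by
  intro p
  induction p with
  | zero =>
    intro f j hj
    simp [mtPow, ← hj]
  | succ p ih =>
    intro f j hj
    have key := ih (fun t => f (t+1)) j hj
    calc (∏ t ∈ Finset.range (p+1), B (f t) (f (t+1)))
        = (∏ t ∈ Finset.range p, B (f (t+1)) (f (t+1+1))) * B (f 0) (f 1) :=
          Finset.prod_range_succ' _ p
      _ ≤ mtPow hn B p (f 1) j * B (f 0) (f 1) :=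
          mul_le_mul_of_nonneg_right key (hB _ _)
      _ = B (f 0) (f 1) * mtPow hn B p (f 1) j := mul_comm _ _
      _ ≤ vmax hn (fun k => B (f 0) k * mtPow hn B p k j) :=
          Finset.le_sup' (fun k => B (f 0) k * mtPow hn B p k j) (Finset.mem_univ (f 1))
      _ = mtPow hn B (p+1) (f 0) j := rfl

/-- Each power entry is either ≤ 0 or bounded above by some path product. -/
lemma mtPow_le_path {n : ℕ} (hn : 0 < n) (B : Matrix (Fin n) (Fin n) ℝ)
    (hB : ∀ i j, 0 ≤ B i j) :
    ∀ p (i j : Fin n), mtPow hn B p i j ≤ 0 ∨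
      ∃ f : ℕ → Fin n, f 0 = i ∧ f p = j ∧
        mtPow hn B p i j ≤ ∏ t ∈ Finset.range p, B (f t) (f (t+1)) := by
  intro p
  induction p with
  | zero =>
    intro i j
    by_cases h : i = j
    · right
      exact ⟨fun _ => i, rfl, by simp [h], by simp [mtPow, h]⟩
    · left; simp [mtPow, h]
  | succ p ih =>
    intro i j
    obtain ⟨k, hk⟩ : ∃ k, mtPow hn B (p+1) i j = B i k * mtPow hn B p k j := by
      obtain ⟨b, -, hb⟩ := Finset.exists_mem_eq_sup'
        (Finset.univ_nonempty_iff.mpr ⟨⟨0, hn⟩⟩) (fun k => B i k * mtPow hn B p k j)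
      exact ⟨b, hb⟩
    rcases ih k j with h0 | ⟨g, hg0, hgp, hgle⟩
    · left
      rw [hk]
      calc B i k * mtPow hn B p k j ≤ B i k * 0 :=
            mul_le_mul_of_nonneg_left h0 (hB i k)
        _ = 0 := mul_zero _
    · right
      refine ⟨fun t => if t = 0 then i else g (t-1), by simp, by simp [hgp], ?_⟩
      have heq : (∏ t ∈ Finset.range (p+1),
          B (if t = 0 then i else g (t-1)) (if t+1 = 0 then i else g (t+1-1)))
          = (∏ t ∈ Finset.range p, B (g t) (g (t+1))) * B i (g 0) := by
        rw [Finset.prod_range_succ']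
        simp
      rw [heq, hk]
      calc B i k * mtPow hn B p k j ≤ B i k * ∏ t ∈ Finset.range p, B (g t) (g (t+1)) :=
            mul_le_mul_of_nonneg_left hgle (hB i k)
        _ = (∏ t ∈ Finset.range p, B (g t) (g (t+1))) * B i (g 0) := by
            rw [hg0, mul_comm]

theorem kleeneStar_dominates_powers {n : ℕ} (hn : 0 < n)
    (B : Matrix (Fin n) (Fin n) ℝ)
    (hB : ∀ i j, 0 ≤ B i j)
    (hTr : ∀ k, 1 ≤ k → k ≤ n → ∀ i, mtPow hn B k i i ≤ 1) :
    ∀ p : ℕ, ∀ i j, mtPow hn B p i j ≤ kstar hn B i j := by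
  have hkstar_ge : ∀ (q : ℕ) (hq : q < n) (i j : Fin n),
      mtPow hn B q i j ≤ kstar hn B i j := fun q hq i j =>
    Finset.le_sup' (fun k : Fin n => mtPow hn B k.1 i j) (Finset.mem_univ ⟨q, hq⟩)
  have hkstar0 : ∀ i j, (0:ℝ) ≤ kstar hn B i j := fun i j =>
    (mtPow_nonneg hn B hB 0 i j).trans (hkstar_ge 0 hn i j)
  intro p
  induction p using Nat.strong_induction_on with
  | _ p IH =>
  intro i j
  by_cases hp : p < n
  · exact hkstar_ge p hp i j
  push_neg at hp
  rcases mtPow_le_path hn B hB p i j with h0 | ⟨f, hf0, hfp, hfle⟩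
  · exact h0.trans (hkstar0 i j)
  -- pigeonhole: the first n+1 vertices of the path contain a repeat
  obtain ⟨x, y, hxy, hfxy⟩ := Fintype.exists_ne_map_eq_of_card_lt
    (fun t : Fin (n+1) => f t.1) (by simp)
  obtain ⟨a, b, hab, hbn, hfab⟩ : ∃ a b : ℕ, a < b ∧ b ≤ n ∧ f a = f b := by
    rcases lt_or_gt_of_ne (Fin.val_ne_of_ne hxy) with h | h
    · exact ⟨x.1, y.1, h, by omega, hfxy⟩
    · exact ⟨y.1, x.1, h, by omega, hfxy.symm⟩
  set c := b - a with hc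
  have hbac : b = a + c := by omega
  have hc1 : 1 ≤ c := by omega
  have hcn : c ≤ n := by omega
  have hbp : b ≤ p := hbn.trans hp
  set w : ℕ → ℝ := fun t => B (f t) (f (t+1)) with hw
  have hwnn : ∀ t, 0 ≤ w t := fun t => hB _ _
  -- the cycle weight is at most 1
  have hcyc : (∏ t ∈ Finset.range c, w (a + t)) ≤ 1 := by
    have := path_le_mtPow hn B hB c (fun t => f (a + t)) (f a)
      (by rw [← hbac, ← hfab])
    calc (∏ t ∈ Finset.range c, w (a + t))
        = ∏ t ∈ Finset.range c, B (f (a + t)) (f (a + t + 1)) := by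
          apply Finset.prod_congr rfl; intro t _
          simp only [hw, add_assoc]
      _ ≤ mtPow hn B c (f (a + 0)) (f a) := this
      _ ≤ 1 := by
          simp only [Nat.add_zero]
          exact hTr c hc1 hcn (f a)
  -- shortened path obtained by removing the cycle
  set g : ℕ → Fin n := fun t => if t < a then f t else f (t + c) with hg
  have hg0 : g 0 = i := by
    by_cases ha : 0 < a
    · simp [hg, ha, hf0]
    · have ha0 : a = 0 := by omega
      simp only [hg, if_neg (by omega : ¬ (0:ℕ) < a)]
      rw [show 0 + c = b by omega, ← hfab, ha0, hf0]
  have hgp : g (p - c) = j := by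
    have h1 : ¬ (p - c < a) := by omega
    simp only [hg, if_neg h1]
    rw [show p - c + c = p by omega, hfp]
  set v : ℕ → ℝ := fun t => B (g t) (g (t+1)) with hv
  have hvw1 : ∀ t, t < a → v t = w t := by
    intro t ht
    simp only [hv, hw, hg, if_pos ht]
    by_cases h2 : t + 1 < a
    · rw [if_pos h2]
    · have : t + 1 = a := by omega
      rw [if_neg h2, this, ← hbac, ← hfab]
  have hvw2 : ∀ t, a ≤ t → v t = w (t + c) := by
    intro t ht
    simp only [hv, hw, hg, if_neg (by omega : ¬ t < a), if_neg (by omega : ¬ t + 1 < a),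
      show t + 1 + c = t + c + 1 from by omega]
  -- product decompositions
  have hfull : (∏ t ∈ Finset.range p, w t)
      = (∏ t ∈ Finset.range a, w t) * (∏ t ∈ Finset.range c, w (a + t))
        * (∏ t ∈ Finset.range (p - b), w (b + t)) := by
    have e1 := Finset.prod_range_add w b (p - b)
    rw [show b + (p - b) = p by omega] at e1
    have e2 := Finset.prod_range_add w a c
    rw [show a + c = b by omega] at e2
    rw [e1, e2]
  have hnew : (∏ t ∈ Finset.range (p - c), v t)
      = (∏ t ∈ Finset.range a, w t) * (∏ t ∈ Finset.range (p - b), w (b + t)) := by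
    have e3 := Finset.prod_range_add v a (p - b)
    rw [show a + (p - b) = p - c by omega] at e3
    rw [e3]
    congr 1
    · exact Finset.prod_congr rfl fun t ht => hvw1 t (Finset.mem_range.mp ht)
    · apply Finset.prod_congr rfl
      intro t _
      rw [hvw2 (a + t) (by omega)]
      congr 1
      omega
  have hshort : (∏ t ∈ Finset.range p, w t) ≤ ∏ t ∈ Finset.range (p - c), v t := by
    rw [hfull, hnew]
    have h1 : (0:ℝ) ≤ ∏ t ∈ Finset.range a, w t :=
      Finset.prod_nonneg fun t _ => hwnn t
    have h2 : (0:ℝ) ≤ ∏ t ∈ Finset.range (p - b), w (b + t) :=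
      Finset.prod_nonneg fun t _ => hwnn _
    calc (∏ t ∈ Finset.range a, w t) * (∏ t ∈ Finset.range c, w (a + t))
          * (∏ t ∈ Finset.range (p - b), w (b + t))
        ≤ (∏ t ∈ Finset.range a, w t) * 1 * (∏ t ∈ Finset.range (p - b), w (b + t)) := by
          apply mul_le_mul_of_nonneg_right _ h2
          exact mul_le_mul_of_nonneg_left hcyc h1
      _ = (∏ t ∈ Finset.range a, w t) * (∏ t ∈ Finset.range (p - b), w (b + t)) := by ring
  have hpath := path_le_mtPow hn B hB (p - c) g j hgp
  rw [hg0] at hpath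
  have hlast : mtPow hn B (p - c) i j ≤ kstar hn B i j := IH (p - c) (by omega) i j
  exact hfle.trans (hshort.trans (hpath.trans hlast))
end

section
/- In max-times algebra, among all positive vectors x satisfying B ⊗ x ≤ x and max_j x_j = 1 (where B is an n×n nonnegative matrix with Tr(B) ≤ 1), the minimum possible value of max_j (1/x_j) equals ‖B*‖ = max_{i,j} (B*)_{ij}, and this minimum is attained by the vector x_j = 1/max_i (B*)_{ij}, which moreover dominates (entrywise) every feasible x. -/
lemma le_vmax {n : ℕ} (hn : 0 < n) (f : Fin n → ℝ) (j : Fin n) : f j ≤ vmax hn f :=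
  Finset.le_sup' f (Finset.mem_univ j)

lemma vmax_le {n : ℕ} (hn : 0 < n) (f : Fin n → ℝ) {a : ℝ} (h : ∀ j, f j ≤ a) :
    vmax hn f ≤ a :=
  Finset.sup'_le _ _ fun j _ => h j

lemma vmax_exists {n : ℕ} (hn : 0 < n) (f : Fin n → ℝ) : ∃ j, vmax hn f = f j := by
  obtain ⟨j, _, hj⟩ := Finset.exists_mem_eq_sup'
    (Finset.univ_nonempty_iff.mpr ⟨(⟨0, hn⟩ : Fin n)⟩) f
  exact ⟨j, hj⟩

lemma vmax_mul {n : ℕ} (hn : 0 < n) (f : Fin n → ℝ) {c : ℝ} (hc : 0 ≤ c) :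
    vmax hn f * c = vmax hn (fun j => f j * c) := by
  obtain ⟨j, hj⟩ := vmax_exists hn f
  obtain ⟨m, hm⟩ := vmax_exists hn (fun j => f j * c)
  apply le_antisymm
  · rw [hj]; exact le_vmax hn (fun j => f j * c) j
  · rw [hm]; exact mul_le_mul_of_nonneg_right (le_vmax hn f m) hc

lemma mul_vmax {n : ℕ} (hn : 0 < n) (f : Fin n → ℝ) {c : ℝ} (hc : 0 ≤ c) :
    c * vmax hn f = vmax hn (fun j => c * f j) := by
  rw [mul_comm, vmax_mul hn f hc]
  simp [mul_comm]

lemma vmax_swap {n : ℕ} (hn : 0 < n) (g : Fin n → Fin n → ℝ) :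
    vmax hn (fun i => vmax hn (g i)) = vmax hn (fun j => vmax hn (fun i => g i j)) :=
  Finset.sup'_comm _ _ g

section
variable {n : ℕ} (hn : 0 < n) (B : Matrix (Fin n) (Fin n) ℝ)

lemma pow_nonneg' (hB : ∀ i j, 0 ≤ B i j) (k : ℕ) : ∀ i j, 0 ≤ mtPow hn B k i j := by
  induction k with
  | zero => intro i j; simp only [mtPow]; split <;> norm_num
  | succ k ih =>
    intro i j
    calc (0:ℝ) ≤ B i i * mtPow hn B k i j := mul_nonneg (hB i i) (ih i j)
    _ ≤ _ := le_vmax hn (fun m => B i m * mtPow hn B k m j) i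

lemma mtProd_assoc (X Y Z : Matrix (Fin n) (Fin n) ℝ)
    (hX : ∀ i j, 0 ≤ X i j) (hZ : ∀ i j, 0 ≤ Z i j) :
    mtProd hn X (mtProd hn Y Z) = mtProd hn (mtProd hn X Y) Z := by
  funext i j
  show vmax hn (fun k => X i k * vmax hn (fun m => Y k m * Z m j))
      = vmax hn (fun m => vmax hn (fun k => X i k * Y k m) * Z m j)
  calc vmax hn (fun k => X i k * vmax hn (fun m => Y k m * Z m j))
      = vmax hn (fun k => vmax hn (fun m => X i k * (Y k m * Z m j))) := by
        congr 1; funext k; exact mul_vmax hn _ (hX i k)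
    _ = vmax hn (fun m => vmax hn (fun k => X i k * (Y k m * Z m j))) := vmax_swap hn _
    _ = vmax hn (fun m => vmax hn (fun k => X i k * Y k m) * Z m j) := by
        congr 1; funext m
        rw [vmax_mul hn _ (hZ m j)]
        congr 1; funext k; ring

lemma mtPow_add (hB : ∀ i j, 0 ≤ B i j) (a b : ℕ) :
    mtPow hn B (a + b) = mtProd hn (mtPow hn B a) (mtPow hn B b) := by
  induction a with
  | zero =>
    funext i j
    simp only [Nat.zero_add]
    show mtPow hn B b i j = vmax hn (fun k => (if i = k then (1:ℝ) else 0) * mtPow hn B b k j)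
    apply le_antisymm
    · calc mtPow hn B b i j = (if i = i then (1:ℝ) else 0) * mtPow hn B b i j := by simp
      _ ≤ _ := le_vmax hn (fun k => (if i = k then (1:ℝ) else 0) * mtPow hn B b k j) i
    · apply vmax_le
      intro k
      by_cases h : i = k
      · subst h; simp
      · simp [h, pow_nonneg' hn B hB b i j]
  | succ a ih =>
    have : a + 1 + b = (a + b) + 1 := by ring
    rw [this]
    show mtProd hn B (mtPow hn B (a+b)) = mtProd hn (mtProd hn B (mtPow hn B a)) (mtPow hn B b)
    rw [ih, mtProd_assoc hn B (mtPow hn B a) (mtPow hn B b) hB (pow_nonneg' hn B hB b)]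

lemma mtPow_comp (hB : ∀ i j, 0 ≤ B i j) (a b : ℕ) (i j l : Fin n) :
    mtPow hn B a i j * mtPow hn B b j l ≤ mtPow hn B (a + b) i l := by
  rw [mtPow_add hn B hB a b]
  exact le_vmax hn (fun m => mtPow hn B a i m * mtPow hn B b m l) j

lemma B_le_pow_one (i j : Fin n) : B i j ≤ mtPow hn B 1 i j := by
  calc B i j = B i j * (if (j:Fin n) = j then (1:ℝ) else 0) := by simp
  _ ≤ _ := le_vmax hn (fun m => B i m * mtPow hn B 0 m j) j

noncomputable def wt (B : Matrix (Fin n) (Fin n) ℝ) (w : ℕ → Fin n) (K : ℕ) : ℝ :=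
  ∏ t ∈ Finset.range K, B (w t) (w (t + 1))

lemma wt_nonneg (hB : ∀ i j, 0 ≤ B i j) (w : ℕ → Fin n) (K : ℕ) : 0 ≤ wt B w K :=
  Finset.prod_nonneg fun t _ => hB _ _

lemma walk_le (hB : ∀ i j, 0 ≤ B i j) : ∀ (K : ℕ) (w : ℕ → Fin n),
    wt B w K ≤ mtPow hn B K (w 0) (w K) := by
  intro K
  induction K with
  | zero => intro w; simp [wt, mtPow]
  | succ K ih =>
    intro w
    have h1 : wt B w (K + 1) = (wt B (fun t => w (t + 1)) K) * B (w 0) (w 1) := by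
      simp only [wt]
      exact Finset.prod_range_succ' (fun t => B (w t) (w (t + 1))) K
    rw [h1]
    calc wt B (fun t => w (t + 1)) K * B (w 0) (w 1)
        ≤ mtPow hn B K (w 1) (w (K + 1)) * B (w 0) (w 1) := by
          exact mul_le_mul_of_nonneg_right (ih (fun t => w (t + 1))) (hB _ _)
      _ = B (w 0) (w 1) * mtPow hn B K (w 1) (w (K + 1)) := mul_comm _ _
      _ ≤ _ := le_vmax hn (fun m => B (w 0) m * mtPow hn B K m (w (K + 1))) (w 1)

lemma walk_ex (hB : ∀ i j, 0 ≤ B i j) : ∀ K, 1 ≤ K → ∀ i j, ∃ w : ℕ → Fin n,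
    w 0 = i ∧ w K = j ∧ mtPow hn B K i j ≤ wt B w K := by
  intro K hK
  induction K, hK using Nat.le_induction with
  | base =>
    intro i j
    refine ⟨fun t => if t = 0 then i else j, by simp, by simp, ?_⟩
    have hwt : wt B (fun t => if t = 0 then i else j) 1 = B i j := by
      simp [wt]
    rw [hwt]
    apply vmax_le hn
    intro m
    by_cases h : m = j
    · subst h; simp only [mtPow]; simp
    · simp only [mtPow]; simp [h, hB i j]
  | succ K hK ih =>
    intro i j
    obtain ⟨m, hm⟩ := vmax_exists hn (fun m => B i m * mtPow hn B K m j)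
    obtain ⟨w', hw'0, hw'K, hw'⟩ := ih m j
    refine ⟨fun t => if t = 0 then i else w' (t - 1), by simp, by simp [hw'K], ?_⟩
    have h1 : wt B (fun t => if t = 0 then i else w' (t - 1)) (K + 1)
        = (wt B w' K) * B i m := by
      simp only [wt]
      rw [Finset.prod_range_succ' (fun t => B (if t = 0 then i else w' (t - 1))
        (if t + 1 = 0 then i else w' (t + 1 - 1))) K]
      simp [hw'0]
    rw [h1]
    have : mtPow hn B (K + 1) i j = B i m * mtPow hn B K m j := hm
    rw [this, mul_comm]
    exact mul_le_mul_of_nonneg_right hw' (hB i m)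

lemma star_bound (hB : ∀ i j, 0 ≤ B i j)
    (hTr : ∀ k, 1 ≤ k → k ≤ n → ∀ i, mtPow hn B k i i ≤ 1) :
    ∀ K i j, mtPow hn B K i j ≤ kstar hn B i j := by
  intro K
  induction K using Nat.strong_induction_on with
  | _ K IH =>
  intro i j
  by_cases hKn : K < n
  · exact le_vmax hn (fun k : Fin n => mtPow hn B k.1 i j) ⟨K, hKn⟩
  · push_neg at hKn
    have hK1 : 1 ≤ K := le_trans hn hKn
    obtain ⟨w, hw0, hwK, hwle⟩ := walk_ex hn B hB K hK1 i j
    -- pigeonhole: a repeated vertex among w 0, ..., w n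
    have hrep : ∃ s t : ℕ, s < t ∧ t ≤ n ∧ w s = w t := by
      have hni : ¬ Function.Injective (fun t : Fin (n + 1) => w t.1) := by
        intro hinj
        have := Fintype.card_le_of_injective _ hinj
        simp at this
      rw [Function.not_injective_iff] at hni
      obtain ⟨a, b, hab, hne⟩ := hni
      rcases lt_or_gt_of_ne hne with h | h
      · exact ⟨a.1, b.1, h, Nat.lt_succ_iff.mp b.isLt, hab⟩
      · exact ⟨b.1, a.1, h, Nat.lt_succ_iff.mp a.isLt, hab.symm⟩
    obtain ⟨s, t, hst, htn, hww⟩ := hrep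
    set d := t - s with hd
    set K' := K - d with hK'
    have hd1 : 1 ≤ d := by omega
    have hdn : d ≤ n := by omega
    have htK : t ≤ K := le_trans htn hKn
    have hsd : s + d = t := by omega
    have hK'd : K' + d = K := by omega
    have hK's : s ≤ K' := by omega
    have hlt : K' < K := by omega
    set f : ℕ → ℝ := fun r => B (w r) (w (r + 1)) with hf
    set w' : ℕ → Fin n := fun r => if r < s then w r else w (r + d) with hw'
    have hw'le : ∀ r, r ≤ s → w' r = w r := by
      intro r hr
      rcases lt_or_eq_of_le hr with h | h
      · simp [hw', h]
      · subst h
        simp only [hw', lt_irrefl, if_false, hsd]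
        exact hww.symm
    have hw'0 : w' 0 = i := by rw [hw'le 0 (Nat.zero_le s), hw0]
    have hw'K : w' K' = j := by
      have : ¬ K' < s := by omega
      simp only [hw', this, if_false, hK'd, hwK]
    -- split the walk weight
    have prodadd : ∀ (g : ℕ → ℝ) (a b : ℕ), (∏ r ∈ Finset.range (a + b), g r) =
        (∏ r ∈ Finset.range a, g r) * ∏ r ∈ Finset.range b, g (a + r) :=
      fun g a b => Finset.prod_range_add g a b
    have split1 : wt B w K = (∏ r ∈ Finset.range t, f r) *
        (∏ r ∈ Finset.range (K - t), f (t + r)) := by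
      have p1 := prodadd f t (K - t)
      rw [show t + (K - t) = K by omega] at p1
      exact p1
    have split2 : (∏ r ∈ Finset.range t, f r) = (∏ r ∈ Finset.range s, f r) *
        (∏ r ∈ Finset.range d, f (s + r)) := by
      have p2 := prodadd f s d
      rw [hsd] at p2
      exact p2
    have hC : (∏ r ∈ Finset.range d, f (s + r)) ≤ 1 := by
      have hCwt : (∏ r ∈ Finset.range d, f (s + r)) = wt B (fun r => w (s + r)) d := rfl
      rw [hCwt]
      calc wt B (fun r => w (s + r)) d ≤ mtPow hn B d (w (s + 0)) (w (s + d)) :=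
            walk_le hn B hB d (fun r => w (s + r))
        _ = mtPow hn B d (w s) (w s) := by rw [hsd, ← hww, Nat.add_zero]
        _ ≤ 1 := hTr d hd1 hdn (w s)
    set f' : ℕ → ℝ := fun r => B (w' r) (w' (r + 1)) with hf'
    have splitw' : wt B w' K' = (∏ r ∈ Finset.range s, f r) *
        (∏ r ∈ Finset.range (K - t), f (t + r)) := by
      have p3 := prodadd f' s (K' - s)
      rw [show s + (K' - s) = K' by omega] at p3
      have e1 : (∏ r ∈ Finset.range s, f' r) = (∏ r ∈ Finset.range s, f r) := by
        apply Finset.prod_congr rfl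
        intro r hr
        rw [Finset.mem_range] at hr
        simp only [hf', hf]
        rw [hw'le r (le_of_lt hr), hw'le (r + 1) hr]
      have e2 : (∏ r ∈ Finset.range (K' - s), f' (s + r)) =
          (∏ r ∈ Finset.range (K - t), f (t + r)) := by
        rw [show K' - s = K - t by omega]
        apply Finset.prod_congr rfl
        intro r _
        simp only [hf', hf, hw']
        rw [if_neg (by omega : ¬ s + r < s), if_neg (by omega : ¬ s + r + 1 < s),
          show s + r + d = t + r by omega, show s + r + 1 + d = t + r + 1 by omega]
      calc wt B w' K' = ∏ r ∈ Finset.range K', f' r := rfl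
        _ = _ := by rw [p3, e1, e2]
    have hA : 0 ≤ (∏ r ∈ Finset.range s, f r) :=
      Finset.prod_nonneg fun r _ => hB _ _
    have hD : 0 ≤ (∏ r ∈ Finset.range (K - t), f (t + r)) :=
      Finset.prod_nonneg fun r _ => hB _ _
    calc mtPow hn B K i j ≤ wt B w K := hwle
      _ = ((∏ r ∈ Finset.range s, f r) * (∏ r ∈ Finset.range (K - t), f (t + r))) *
          (∏ r ∈ Finset.range d, f (s + r)) := by rw [split1, split2]; ring
      _ ≤ ((∏ r ∈ Finset.range s, f r) * (∏ r ∈ Finset.range (K - t), f (t + r))) * 1 := by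
          exact mul_le_mul_of_nonneg_left hC (mul_nonneg hA hD)
      _ = wt B w' K' := by rw [mul_one, splitw']
      _ ≤ mtPow hn B K' (w' 0) (w' K') := walk_le hn B hB K' w'
      _ = mtPow hn B K' i j := by rw [hw'0, hw'K]
      _ ≤ kstar hn B i j := IH K' hlt i j

lemma kstar_diag_le_one (hTr : ∀ k, 1 ≤ k → k ≤ n → ∀ i, mtPow hn B k i i ≤ 1)
    (j : Fin n) : kstar hn B j j ≤ 1 := by
  apply vmax_le hn
  intro k
  rcases Nat.eq_zero_or_pos k.1 with h | h
  · rw [h]; simp [mtPow]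
  · exact hTr k.1 h (le_of_lt k.isLt) j

lemma one_le_kstar_diag (j : Fin n) : 1 ≤ kstar hn B j j := by
  have : mtPow hn B (0 : ℕ) j j = 1 := by simp [mtPow]
  calc (1:ℝ) = mtPow hn B ((⟨0, hn⟩ : Fin n) : ℕ) j j := this.symm
    _ ≤ _ := le_vmax hn (fun k : Fin n => mtPow hn B k.1 j j) ⟨0, hn⟩

-- feasible x bound: (B^k)_{ij} x_j ≤ x_i
lemma pow_feas (hB : ∀ i j, 0 ≤ B i j) (x : Fin n → ℝ) (hpos : ∀ i, 0 < x i)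
    (hfeas : ∀ i, mtVec hn B x i ≤ x i) (k : ℕ) :
    ∀ i j, mtPow hn B k i j * x j ≤ x i := by
  induction k with
  | zero =>
    intro i j
    by_cases h : i = j
    · subst h; simp [mtPow]
    · simp [mtPow, h]
      exact le_of_lt (hpos i)
  | succ k ih =>
    intro i j
    have h1 : mtPow hn B (k + 1) i j * x j
        = vmax hn (fun m => B i m * mtPow hn B k m j * x j) := by
      have := vmax_mul hn (fun m => B i m * mtPow hn B k m j) (le_of_lt (hpos j))
      exact this
    rw [h1]
    apply vmax_le hn
    intro m
    calc B i m * mtPow hn B k m j * x j = B i m * (mtPow hn B k m j * x j) := by ring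
      _ ≤ B i m * x m := mul_le_mul_of_nonneg_left (ih m j) (hB i m)
      _ ≤ mtVec hn B x i := le_vmax hn (fun m => B i m * x m) m
      _ ≤ x i := hfeas i

lemma kstar_feas (hB : ∀ i j, 0 ≤ B i j) (x : Fin n → ℝ) (hpos : ∀ i, 0 < x i)
    (hfeas : ∀ i, mtVec hn B x i ≤ x i) (i j : Fin n) :
    kstar hn B i j * x j ≤ x i := by
  rw [kstar, vmax_mul hn _ (le_of_lt (hpos j))]
  apply vmax_le hn
  intro k
  exact pow_feas hn B hB x hpos hfeas k.1 i j

-- there is a column with max kstar entry ≤ 1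
lemma exists_col_le_one (hB : ∀ i j, 0 ≤ B i j)
    (hTr : ∀ k, 1 ≤ k → k ≤ n → ∀ i, mtPow hn B k i i ≤ 1) :
    ∃ j, vmax hn (fun i => kstar hn B i j) ≤ 1 := by
  by_contra hcon
  push_neg at hcon
  -- for every j there is i and L ≥ 1 with (B^L)_{ij} > 1
  have H : ∀ j : Fin n, ∃ p : Fin n × ℕ, 1 ≤ p.2 ∧ 1 < mtPow hn B p.2 p.1 j := by
    intro j
    obtain ⟨i, hi⟩ := vmax_exists hn (fun i => kstar hn B i j)
    obtain ⟨k, hk⟩ := vmax_exists hn (fun k : Fin n => mtPow hn B k.1 i j)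
    have h1 : 1 < mtPow hn B k.1 i j := by
      have := hcon j
      rw [hi] at this
      rw [kstar] at this
      rw [hk] at this
      exact this
    refine ⟨⟨i, k.1⟩, ?_, h1⟩
    by_contra hk0
    push_neg at hk0
    have hk00 : k.1 = 0 := by omega
    rw [hk00] at h1
    revert h1
    simp only [mtPow]
    by_cases hij : i = j <;> simp [hij]
  choose p hp1 hp2 using H
  set F : Fin n → Fin n := fun j => (p j).1 with hF
  -- iterate F; find a cycle
  have hrep : ∃ a b : ℕ, a < b ∧ F^[a] ⟨0, hn⟩ = F^[b] ⟨0, hn⟩ := by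
    have hni : ¬ Function.Injective (fun t : Fin (n + 1) => F^[t.1] ⟨0, hn⟩) := by
      intro hinj
      have := Fintype.card_le_of_injective _ hinj
      simp at this
    rw [Function.not_injective_iff] at hni
    obtain ⟨a, b, hab, hne⟩ := hni
    rcases lt_or_gt_of_ne hne with h | h
    · exact ⟨a.1, b.1, h, hab⟩
    · exact ⟨b.1, a.1, h, hab.symm⟩
  obtain ⟨a, b, hab, hcyc⟩ := hrep
  set j0 : Fin n := F^[a] ⟨0, hn⟩ with hj0
  have hfix : F^[b - a] j0 = j0 := by
    rw [hj0, ← Function.iterate_add_apply, show b - a + a = b by omega, ← hcyc]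
  -- chain: for all m ≥ 1 there is L with (B^L)_{F^[m] j0, j0} > 1
  have chain : ∀ m, 1 ≤ m → ∃ L, 1 < mtPow hn B L (F^[m] j0) j0 := by
    intro m hm
    induction m, hm using Nat.le_induction with
    | base =>
      refine ⟨(p j0).2, ?_⟩
      rw [Function.iterate_one]
      exact hp2 j0
    | succ m hm ih =>
      obtain ⟨L, hL⟩ := ih
      refine ⟨(p (F^[m] j0)).2 + L, ?_⟩
      have step : 1 < mtPow hn B (p (F^[m] j0)).2 (F^[m + 1] j0) (F^[m] j0) := by
        rw [Function.iterate_succ_apply']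
        exact hp2 (F^[m] j0)
      calc (1:ℝ) = 1 * 1 := by norm_num
        _ < mtPow hn B (p (F^[m] j0)).2 (F^[m + 1] j0) (F^[m] j0) *
            mtPow hn B L (F^[m] j0) j0 := by
          apply mul_lt_mul'' step hL <;> norm_num
        _ ≤ _ := mtPow_comp hn B hB _ L _ _ _
  obtain ⟨L, hL⟩ := chain (b - a) (by omega)
  rw [hfix] at hL
  have : mtPow hn B L j0 j0 ≤ 1 :=
    le_trans (star_bound hn B hB hTr L j0 j0) (kstar_diag_le_one hn B hTr j0)
  linarith
end

theorem worst_differentiating_solution {n : ℕ} (hn : 0 < n)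
    (B : Matrix (Fin n) (Fin n) ℝ)
    (hB : ∀ i j, 0 ≤ B i j)
    (hTr : ∀ k, 1 ≤ k → k ≤ n → ∀ i, mtPow hn B k i i ≤ 1)
    (x₀ : Fin n → ℝ)
    (hx₀ : ∀ j, x₀ j = 1 / vmax hn (fun i => kstar hn B i j)) :
    (∀ x : Fin n → ℝ, (∀ i, 0 < x i) → (∀ i, mtVec hn B x i ≤ x i) →
        vmax hn x = 1 →
        vmax hn (fun i => vmax hn (fun j => kstar hn B i j)) ≤
          vmax hn (fun j => 1 / x j)) ∧
    ((∀ i, mtVec hn B x₀ i ≤ x₀ i) ∧ vmax hn x₀ = 1 ∧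
      vmax hn (fun j => 1 / x₀ j) =
        vmax hn (fun i => vmax hn (fun j => kstar hn B i j))) ∧
    (∀ x : Fin n → ℝ, (∀ i, 0 < x i) → (∀ i, mtVec hn B x i ≤ x i) →
        vmax hn x = 1 → ∀ j, x j ≤ x₀ j) := by
  set c : Fin n → ℝ := fun j => vmax hn (fun i => kstar hn B i j) with hc
  have hc1 : ∀ j, 1 ≤ c j := by
    intro j
    calc (1:ℝ) ≤ kstar hn B j j := one_le_kstar_diag hn B j
      _ ≤ c j := le_vmax hn (fun i => kstar hn B i j) j
  have hcpos : ∀ j, 0 < c j := fun j => lt_of_lt_of_le one_pos (hc1 j)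
  have hx₀pos : ∀ j, 0 < x₀ j := by
    intro j
    rw [hx₀ j]
    exact div_pos one_pos (hcpos j)
  refine ⟨?_, ⟨?_, ?_, ?_⟩, ?_⟩
  · -- part (i)
    intro x hpos hfeas hnorm
    apply vmax_le hn
    intro i
    apply vmax_le hn
    intro j
    calc kstar hn B i j ≤ 1 / x j := by
          rw [le_div_iff₀ (hpos j)]
          calc kstar hn B i j * x j ≤ x i := kstar_feas hn B hB x hpos hfeas i j
            _ ≤ vmax hn x := le_vmax hn x i
            _ = 1 := hnorm
      _ ≤ vmax hn (fun j => 1 / x j) := le_vmax hn (fun j => 1 / x j) j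
  · -- part (ii): feasibility of x₀
    intro i
    apply vmax_le hn
    intro j
    have key : B i j * c i ≤ c j := by
      obtain ⟨l, hl⟩ := vmax_exists hn (fun l => kstar hn B l i)
      obtain ⟨k, hk⟩ := vmax_exists hn (fun k : Fin n => mtPow hn B k.1 l i)
      have hci : c i = mtPow hn B k.1 l i := hl.trans hk
      rw [hci]
      calc B i j * mtPow hn B k.1 l i = mtPow hn B k.1 l i * B i j := mul_comm _ _
        _ ≤ mtPow hn B k.1 l i * mtPow hn B 1 i j :=
            mul_le_mul_of_nonneg_left (B_le_pow_one hn B i j) (pow_nonneg' hn B hB k.1 l i)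
        _ ≤ mtPow hn B (k.1 + 1) l j := mtPow_comp hn B hB k.1 1 l i j
        _ ≤ kstar hn B l j := star_bound hn B hB hTr (k.1 + 1) l j
        _ ≤ c j := le_vmax hn (fun l => kstar hn B l j) l
    rw [hx₀ j, hx₀ i]
    rw [mul_one_div, div_le_div_iff₀ (hcpos j) (hcpos i)]
    calc B i j * c i ≤ c j := key
      _ = 1 * c j := (one_mul _).symm
  · -- part (ii): normalization
    apply le_antisymm
    · apply vmax_le hn
      intro j
      rw [hx₀ j]
      rw [div_le_one (hcpos j)]
      exact hc1 j
    · obtain ⟨j, hj⟩ := exists_col_le_one hn B hB hTr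
      have hcj : c j = 1 := le_antisymm hj (hc1 j)
      calc (1:ℝ) = x₀ j := by
            rw [hx₀ j, show (vmax hn fun i => kstar hn B i j) = c j from rfl, hcj]
            norm_num
        _ ≤ vmax hn x₀ := le_vmax hn x₀ j
  · -- part (ii): the value
    have h1 : (fun j => 1 / x₀ j) = c := by
      funext j
      rw [hx₀ j, one_div_one_div]
    rw [h1]
    rw [vmax_swap hn (fun i j => kstar hn B i j)]
  · -- part (iii)
    intro x hpos hfeas hnorm j
    rw [hx₀ j, le_div_iff₀ (hcpos j)]
    obtain ⟨i, hi⟩ := vmax_exists hn (fun i => kstar hn B i j)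
    have hcj : c j = kstar hn B i j := hi
    rw [hcj]
    calc x j * kstar hn B i j = kstar hn B i j * x j := mul_comm _ _
      _ ≤ x i := kstar_feas hn B hB x hpos hfeas i j
      _ ≤ vmax hn x := le_vmax hn x i
      _ = 1 := hnorm
end
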